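/- For integers a ≥ k ≥ s+1 ≥ 1 and b ≥ 0, the identity ((a-s)/a)·binom(b+s,s)·binom(b+k,k-s) - ((a-k)/a)·binom(k-1,s-1)·binom(b+k,k) = binom(k-1,s)·binom(b+k,k) holds in Q. -/

import Mathlib

/-- The binomial coefficient `binom(n, m)` with an integer lower index, extended by `0`
for `m < 0`. -/
def zbinom (n : ℕ) (m : ℤ) : ℚ :=
  if 0 ≤ m then (n.choose m.toNat : ℚ) else 0

/-- For integers `a ≥ k ≥ s+1 ≥ 1`, `b ≥ 0`:
`((a-s)/a)·binom(b+s,s)·binom(b+k,k-s) - ((a-k)/a)·binom(k-1,s-1)·binom(b+k,k)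
  = binom(k-1,s)·binom(b+k,k)` in `ℚ`. -/
theorem binom_identity_R (a k s b : ℕ) (hks : s + 1 ≤ k) (hka : k ≤ a) :
    ((a : ℚ) - s) / a * ((b + s).choose s : ℚ) * ((b + k).choose (k - s) : ℚ)
      - ((a : ℚ) - k) / a * zbinom (k - 1) ((s : ℤ) - 1) * ((b + k).choose k : ℚ)
    = ((k - 1).choose s : ℚ) * ((b + k).choose k : ℚ) := by
  have hsk : s ≤ k := le_trans (Nat.le_succ s) hks
  have ha0 : 0 < a := lt_of_lt_of_le (lt_of_lt_of_le (Nat.succ_pos s) hks) hka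
  have haQ : (a : ℚ) ≠ 0 := Nat.cast_ne_zero.mpr ha0.ne'
  -- key combinatorial identity
  have keyN : (b + s).choose s * (b + k).choose (k - s) = k.choose s * (b + k).choose k := by
    have h1 : (b + k).choose (k - s) = (b + k).choose (b + s) := by
      have := Nat.choose_symm (show b + s ≤ b + k by omega)
      rwa [show b + k - (b + s) = k - s by omega] at this
    have h2 : (b + s).choose s = (b + s).choose b := by
      have := Nat.choose_symm (show b ≤ b + s by omega)
      rwa [show b + s - b = s by omega] at this
    have h3 : (b + k).choose k = (b + k).choose b := by
      have := Nat.choose_symm (show b ≤ b + k by omega)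
      rwa [show b + k - b = k by omega] at this
    have := Nat.choose_mul (n := b + k) (k := b + s) (s := b)
      (Nat.le_add_right _ _)
    simp only [Nat.add_sub_cancel_left] at this
    rw [h1, h2, h3, mul_comm, this, mul_comm]
  have key : ((b + s).choose s : ℚ) * ((b + k).choose (k - s) : ℚ)
      = (k.choose s : ℚ) * ((b + k).choose k : ℚ) := by exact_mod_cast keyN
  rcases Nat.eq_zero_or_pos s with hs | hs
  · subst hs
    simp only [zbinom]
    norm_num
    field_simp
  · -- s ≥ 1
    have hz : zbinom (k - 1) ((s : ℤ) - 1) = ((k - 1).choose (s - 1) : ℚ) := by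
      unfold zbinom
      rw [if_pos (by omega)]
      congr 2
      omega
    rw [hz]
    -- Pascal
    have pascal : (k.choose s : ℚ) = ((k - 1).choose (s - 1) : ℚ) + ((k - 1).choose s : ℚ) := by
      have : k.choose s = (k - 1).choose (s - 1) + (k - 1).choose s := by
        have hk : k = (k - 1) + 1 := by omega
        have hs' : s = (s - 1) + 1 := by omega
        rw [hk, hs', Nat.choose_succ_succ]
        simp only [Nat.succ_sub_one]
      exact_mod_cast this
    -- absorption
    have abs : ((k - 1).choose s : ℚ) * s = ((k - 1).choose (s - 1) : ℚ) * ((k : ℚ) - s) := by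
      have h := Nat.choose_succ_right_eq (k - 1) (s - 1)
      have hs' : s - 1 + 1 = s := by omega
      rw [hs'] at h
      have h2 : ((k - 1).choose s : ℚ) * s = ((k - 1).choose (s - 1) : ℚ) * ((k - 1 - (s - 1) : ℕ) : ℚ) := by
        exact_mod_cast h
      rw [h2]
      congr 1
      have : k - 1 - (s - 1) = k - s := by omega
      rw [this]
      rw [Nat.cast_sub hsk]
    rw [mul_assoc, key, ← mul_assoc]
    field_simp
    linear_combination ((a : ℚ) - s) * (((b + k).choose k : ℚ)) * pascal
      - (((b + k).choose k : ℚ)) * abs
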